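/- Let G be the multiplication table of the group (ℤ/2ℤ)^k, viewed as a Latin square of order n = 2^k via L x y = x + y. Then the number of intercalates of L (unordered pairs of rows {i,j} with i ≠ j and unordered pairs of columns {x,y} with x ≠ y such that L i x = L j y and L i y = L j x) is exactly n^2(n-1)/4. -/

import Mathlib

set_option maxHeartbeats 1000000 in
/-- The multiplication table of `(ℤ/2ℤ)^k`, i.e. `L x y = x + y`, has exactly
`n²(n-1)/4` intercalates, where `n = 2^k`. An intercalate is an unordered pair
of distinct rows together with an unordered pair of distinct columns satisfying
`L i x = L j y` and `L i y = L j x`. -/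
theorem intercalates_of_elementary_abelian_two_group (k : ℕ) :
    Set.ncard {pq : Sym2 (Fin k → ZMod 2) × Sym2 (Fin k → ZMod 2) |
      ∃ i j x y : Fin k → ZMod 2, pq.1 = s(i, j) ∧ pq.2 = s(x, y) ∧
        i ≠ j ∧ x ≠ y ∧ i + x = j + y ∧ i + y = j + x}
      = (2 ^ k) ^ 2 * (2 ^ k - 1) / 4 := by
  classical
  set V := Fin k → ZMod 2 with hV
  have two : ∀ v : V, v + v = 0 := fun v => funext fun i => by
    have h : ∀ a : ZMod 2, a + a = 0 := by decide
    exact h (v i)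
  have eqz : ∀ u w : V, u = w ↔ u + w = 0 := by
    intro u w
    constructor
    · rintro rfl; exact two _
    · intro h
      calc u = u + (w + w) := by rw [two, add_zero]
        _ = (u + w) + w := by ring
        _ = w := by rw [h, zero_add]
  have conv : ∀ a b c d : V, a + b = c + d ↔ a + c = b + d := by
    intro a b c d
    rw [eqz (a+b) (c+d), eqz (a+c) (b+d),
      show a+b+(c+d) = a+c+(b+d) from by ring]
  set g : V × V × V × V → Sym2 V × Sym2 V :=
    fun t => (s(t.1, t.2.1), s(t.2.2.1, t.2.2.2)) with hg
  set T : Finset (V × V × V × V) :=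
    Finset.univ.filter
      (fun t => t.1 ≠ t.2.1 ∧ t.2.2.1 ≠ t.2.2.2 ∧ t.1 + t.2.1 = t.2.2.1 + t.2.2.2) with hT
  have hset : {pq : Sym2 V × Sym2 V |
      ∃ i j x y : V, pq.1 = s(i, j) ∧ pq.2 = s(x, y) ∧
        i ≠ j ∧ x ≠ y ∧ i + x = j + y ∧ i + y = j + x} = ↑(T.image g) := by
    ext pq
    simp only [Set.mem_setOf_eq, Finset.coe_image, Set.mem_image, Finset.mem_coe,
      Finset.mem_filter, Finset.mem_univ, true_and, hT, hg]
    constructor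
    · rintro ⟨i, j, x, y, h1, h2, hij, hxy, hc1, hc2⟩
      refine ⟨(i, j, x, y), ⟨hij, hxy, (conv i x j y).mp hc1⟩, ?_⟩
      rw [Prod.ext_iff]; exact ⟨h1.symm, h2.symm⟩
    · rintro ⟨⟨i, j, x, y⟩, ⟨hij, hxy, hsum⟩, rfl⟩
      refine ⟨i, j, x, y, rfl, rfl, hij, hxy, (conv i x j y).mpr hsum, ?_⟩
      exact (conv i y j x).mpr (by rw [hsum]; ring)
  have hfiber : ∀ s ∈ T.image g, (T.filter (fun t => g t = s)).card = 4 := by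
    intro s hs
    obtain ⟨⟨i, j, x, y⟩, ht, rfl⟩ := Finset.mem_image.mp hs
    obtain ⟨hij, hxy, hsum⟩ := (Finset.mem_filter.mp ht).2
    dsimp only at hij hxy hsum
    have hfe : T.filter (fun t => g t = g (i, j, x, y)) =
        {(i, j, x, y), (i, j, y, x), (j, i, x, y), (j, i, y, x)} := by
      ext ⟨a, b, c, d⟩
      simp only [Finset.mem_filter, Finset.mem_insert, Finset.mem_singleton, hT, hg,
        Finset.mem_univ, true_and, Prod.mk.injEq, Sym2.eq_iff]
      constructor
      · rintro ⟨-, h1, h2⟩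
        tauto
      · intro h
        have hsum' : i + j = y + x := by rw [hsum]; ring
        have hji : j + i = x + y := by rw [← hsum]; ring
        have hji' : j + i = y + x := by rw [add_comm j i]; exact hsum'
        rcases h with ⟨rfl, rfl, rfl, rfl⟩ | ⟨rfl, rfl, rfl, rfl⟩ | ⟨rfl, rfl, rfl, rfl⟩ |
          ⟨rfl, rfl, rfl, rfl⟩
        · exact ⟨⟨hij, hxy, hsum⟩, Or.inl ⟨rfl, rfl⟩, Or.inl ⟨rfl, rfl⟩⟩
        · exact ⟨⟨hij, hxy.symm, hsum'⟩, Or.inl ⟨rfl, rfl⟩, Or.inr ⟨rfl, rfl⟩⟩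
        · exact ⟨⟨hij.symm, hxy, hji⟩, Or.inr ⟨rfl, rfl⟩, Or.inl ⟨rfl, rfl⟩⟩
        · exact ⟨⟨hij.symm, hxy.symm, hji'⟩, Or.inr ⟨rfl, rfl⟩, Or.inr ⟨rfl, rfl⟩⟩
    rw [hfe]
    have e1 : ((i, j, x, y) : V × V × V × V) ∉
        ({(i, j, y, x), (j, i, x, y), (j, i, y, x)} : Finset _) := by
      simp only [Finset.mem_insert, Finset.mem_singleton, Prod.mk.injEq]
      push_neg
      refine ⟨fun _ _ h => (hxy h).elim, fun h => (hij h).elim, fun h => (hij h).elim⟩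
    have e2 : ((i, j, y, x) : V × V × V × V) ∉
        ({(j, i, x, y), (j, i, y, x)} : Finset _) := by
      simp only [Finset.mem_insert, Finset.mem_singleton, Prod.mk.injEq]
      push_neg
      exact ⟨fun h => (hij h).elim, fun h => (hij h).elim⟩
    have e3 : ((j, i, x, y) : V × V × V × V) ∉ ({(j, i, y, x)} : Finset _) := by
      simp only [Finset.mem_singleton, Prod.mk.injEq]
      push_neg
      exact fun _ _ h => (hxy h).elim
    rw [Finset.card_insert_of_notMem e1, Finset.card_insert_of_notMem e2,
      Finset.card_insert_of_notMem e3, Finset.card_singleton]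
  have hcardV : Fintype.card V = 2 ^ k := by
    show Fintype.card (Fin k → ZMod 2) = 2 ^ k
    simp [ZMod.card]
  have hTcard : T.card = (2 ^ k * 2 ^ k - 2 ^ k) * 2 ^ k := by
    have hb : ((Finset.univ : Finset V).offDiag ×ˢ (Finset.univ : Finset V)).card = T.card := by
      apply Finset.card_nbij' (i := fun p : (V × V) × V => (p.1.1, p.1.2, p.2, p.1.1 + p.1.2 + p.2))
        (j := fun t : V × V × V × V => ((t.1, t.2.1), t.2.2.1))
      · rintro ⟨⟨a, b⟩, c⟩ hp
        rw [Finset.mem_coe, Finset.mem_product, Finset.mem_offDiag] at hp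
        obtain ⟨⟨-, -, hab⟩, -⟩ := hp
        dsimp only at hab
        rw [hT, Finset.mem_coe, Finset.mem_filter]
        refine ⟨Finset.mem_univ _, ?_, ?_, ?_⟩ <;> dsimp only
        · exact hab
        · intro h
          apply hab
          apply (eqz a b).mpr
          have hc : a + b + (c + c) = c + c := by
            rw [show a + b + (c + c) = (a + b + c) + c from by ring, ← h]
          rwa [two, add_zero] at hc
        · calc a + b = (a + b) + (c + c) := by rw [two, add_zero]
            _ = c + (a + b + c) := by ring
      · rintro ⟨a, b, c, d⟩ ht
        rw [hT, Finset.mem_coe, Finset.mem_filter] at ht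
        obtain ⟨-, hab, -, -⟩ := ht
        dsimp only at hab
        rw [Finset.mem_coe, Finset.mem_product, Finset.mem_offDiag]
        exact ⟨⟨Finset.mem_univ _, Finset.mem_univ _, hab⟩, Finset.mem_univ _⟩
      · rintro ⟨⟨a, b⟩, c⟩ -
        rfl
      · rintro ⟨a, b, c, d⟩ ht
        rw [hT, Finset.mem_coe, Finset.mem_filter] at ht
        obtain ⟨-, -, -, hs⟩ := ht
        dsimp only at hs
        have hd : a + b + c = d := by
          calc a + b + c = (c + d) + c := by rw [← hs]
            _ = d + (c + c) := by ring
            _ = d := by rw [two, add_zero]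
        dsimp only
        rw [hd]
    rw [← hb, Finset.card_product, Finset.offDiag_card, Finset.card_univ, hcardV]
  have hmain : (T.image g).card * 4 = T.card := by
    rw [Finset.card_eq_sum_card_fiberwise (fun t ht => Finset.mem_image_of_mem g ht),
      Finset.sum_congr rfl hfiber, Finset.sum_const, smul_eq_mul, mul_comm]
  rw [hset, Set.ncard_coe_finset]
  have harith : (2 ^ k) ^ 2 * (2 ^ k - 1) = (T.image g).card * 4 := by
    rw [hmain, hTcard, pow_two, Nat.mul_sub, Nat.sub_mul, mul_one]
  rw [harith, Nat.mul_div_cancel _ (by norm_num)]
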